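/- For 0 < a ≤ 1 ≤ b, let 𝒜(x) = |x|^(a-1)·x if |x| ≤ 1 and 𝒜(x) = |x|^(b-1)·x if |x| > 1. For nonzero x, y ∈ ℝⁿ with |x| ≤ |y| and x ≠ y, let z = (x/|x|)·(|x| + |x-y|). Then |𝒜(x) - 𝒜(y)| ≤ (2/(3^a - 1))·|𝒜(x) - 𝒜(z)|, and the constant 2/(3^a - 1) is sharp: the supremum of the ratio |𝒜(x)-𝒜(y)|/|𝒜(x)-𝒜(z)| over such pairs equals 2/(3^a - 1). -/

import Mathlib

open Real

/-- The two-exponent radial stretch map `𝒜_{a,b}`. -/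
noncomputable def radialA (n : ℕ) (a b : ℝ) (x : EuclideanSpace ℝ (Fin n)) :
    EuclideanSpace ℝ (Fin n) :=
  if ‖x‖ ≤ 1 then (‖x‖ ^ (a - 1)) • x else (‖x‖ ^ (b - 1)) • x

lemma rpow_le_tangent {a x : ℝ} (ha : 0 < a) (ha1 : a ≤ 1) (hx : 0 < x) :
    x ^ a ≤ 1 + a * (x - 1) := by
  have h := convexOn_exp.2 (Set.mem_univ (0:ℝ)) (Set.mem_univ (Real.log x))
    (by linarith : (0:ℝ) ≤ 1 - a) ha.le (by ring)
  simp only [smul_eq_mul, mul_zero, zero_add, Real.exp_zero, Real.exp_log hx] at h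
  rw [Real.rpow_def_of_pos hx]
  calc Real.exp (Real.log x * a) = Real.exp (a * Real.log x) := by ring_nf
    _ ≤ (1-a) * 1 + a * x := h
    _ = 1 + a * (x - 1) := by ring

lemma rpow_interp {u v θ a : ℝ} (hu : 0 ≤ u) (hv : 0 ≤ v) (hθ : 0 ≤ θ) (hθ1 : θ ≤ 1)
    (ha : 0 ≤ a) (ha1 : a ≤ 1) :
    (1 - θ) * u ^ a + θ * v ^ a ≤ ((1 - θ) * u + θ * v) ^ a := by
  have h := (Real.concaveOn_rpow ha ha1).2 (Set.mem_Ici.2 hu) (Set.mem_Ici.2 hv)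
    (by linarith : (0:ℝ) ≤ 1 - θ) hθ (by ring)
  simpa [smul_eq_mul] using h

/-- polynomial certificate -/
lemma cert_poly {m δ K τ : ℝ} (hm0 : 0 ≤ m) (hm1 : m ≤ 1) (hK0 : 0 ≤ K) (hK2 : K ≤ 2)
    (hτ0 : 0 ≤ τ) (hτ1 : τ ≤ 1) (hKd : K * δ ≤ 2 * (1 - m)) :
    K^2*(1-m)^2 + 4*K^2*m*τ*(δ + (1-δ)*τ)
      ≤ 4*((1-m) + ((2*(K+1)*m + K - 2)/3)*τ)^2 := by
  have hA : 0 ≤ (1-m) * (12*K*τ^2*(2-K)*m) := by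
    apply mul_nonneg (by linarith)
    apply mul_nonneg _ hm0
    apply mul_nonneg _ (by linarith)
    positivity
  have hB : 0 ≤ (1-m)*(1-m) * ((2-K)*(2*(2*τ-3)^2 + K*(9-4*τ^2))) := by
    have h9 : 0 ≤ 9 - 4*τ^2 := by nlinarith
    have : 0 ≤ (2-K)*(2*(2*τ-3)^2 + K*(9-4*τ^2)) := by
      apply mul_nonneg (by linarith)
      have := sq_nonneg (2*τ-3)
      nlinarith [mul_nonneg hK0 h9]
    apply mul_nonneg (by nlinarith) this
  have hC : 0 ≤ 36*K*τ*(1-τ)*m*(2*(1-m) - K*δ) := by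
    apply mul_nonneg _ (by linarith)
    apply mul_nonneg _ hm0
    apply mul_nonneg _ (by linarith)
    apply mul_nonneg (by linarith) hτ0
  have hid : 9 * (4*((1-m) + ((2*(K+1)*m + K - 2)/3)*τ)^2
        - (K^2*(1-m)^2 + 4*K^2*m*τ*(δ + (1-δ)*τ)))
      = (1-m) * (12*K*τ^2*(2-K)*m)
        + (1-m)*(1-m) * ((2-K)*(2*(2*τ-3)^2 + K*(9-4*τ^2)))
        + 36*K*τ*(1-τ)*m*(2*(1-m) - K*δ) := by ring
  linarith

/-- The normalized core inequality. -/
lemma core_norm {a ρ τ : ℝ} (ha : 0 < a) (ha1 : a ≤ 1) (hρ : 0 < ρ) (hρ1 : ρ ≤ 1)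
    (hτ : 0 ≤ τ) (hτ1 : τ ≤ 1) :
    ρ ^ (a-1) * ((1+2*ρ*τ) - 1) * ((1+2*ρ*τ) + 1 - 2*ρ) + (1 - ρ^a)^2
      ≤ (2/(3^a-1))^2 * ((1+2*ρ*τ)^a - ρ^a)^2 := by
  set m := ρ ^ a with hm
  have hm_pos : 0 < m := Real.rpow_pos_of_pos hρ a
  have hm1 : m ≤ 1 := Real.rpow_le_one hρ.le hρ1 ha.le
  have hrw : ρ ^ (a-1) = m / ρ := by
    rw [hm, Real.rpow_sub hρ, Real.rpow_one]
  set K := (3:ℝ)^a - 1 with hK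
  have h31 : (1:ℝ) < 3 ^ a :=
    (Real.one_lt_rpow_iff_of_pos (by norm_num)).2 (Or.inl ⟨by norm_num, ha⟩)
  have hK_pos : 0 < K := by rw [hK]; linarith
  have hK2a : K ≤ 2 * a := by
    have := rpow_le_tangent ha ha1 (by norm_num : (0:ℝ) < 3)
    rw [hK]; linarith
  have hKle2 : K ≤ 2 := by linarith
  have htan : m ≤ 1 + a * (ρ - 1) := rpow_le_tangent ha ha1 hρ
  set δ := 1 - ρ with hδ
  have hKd : K * δ ≤ 2 * (1 - m) := by
    have h1 : a * δ ≤ 1 - m := by rw [hδ]; nlinarith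
    nlinarith [mul_nonneg (by linarith : (0:ℝ) ≤ δ) (by linarith : (0:ℝ) ≤ 2*a - K)]
  set G := (2*(K+1)*m + K - 2)/3 with hG
  -- interpolation bounds
  have hinterp1 : (2/3) * (3*ρ)^a + (1/3) * 3^a ≤ (1+2*ρ)^a := by
    have h := rpow_interp (u := 3*ρ) (v := 3) (θ := 1/3) (by linarith) (by norm_num)
      (by norm_num) (by norm_num) ha.le ha1
    have e : (1 - 1/3) * (3*ρ) + (1/3:ℝ) * 3 = 1 + 2*ρ := by ring
    rw [e] at h
    linarith
  have h3ra : (3*ρ)^a = 3^a * m := by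
    rw [hm, Real.mul_rpow (by norm_num) hρ.le]
  have hG_le : 1 + G ≤ (1+2*ρ)^a := by
    rw [h3ra] at hinterp1
    have e1 : 1 + G = (2/3) * ((K+1) * m) + (1/3) * (K+1) := by rw [hG]; ring
    have e2 : (K+1 : ℝ) = 3^a := by rw [hK]; ring
    rw [e1, e2]
    linarith
  have hp_interp : 1 + τ * ((1+2*ρ)^a - 1) ≤ (1+2*ρ*τ)^a := by
    have h := rpow_interp (u := 1) (v := 1+2*ρ) (θ := τ) (by norm_num) (by linarith) hτ hτ1
      ha.le ha1
    have e : (1 - τ) * 1 + τ * (1+2*ρ) = 1 + 2*ρ*τ := by ring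
    rw [e, Real.one_rpow] at h
    linarith
  have hEGτ : (1-m) + G * τ ≤ (1+2*ρ*τ)^a - m := by
    have h1 : τ * G ≤ τ * ((1+2*ρ)^a - 1) := by
      apply mul_le_mul_of_nonneg_left _ hτ; linarith
    nlinarith
  have hEGτ_nonneg : 0 ≤ (1-m) + G * τ := by
    have hidG : 3 * ((1-m) + G * τ) = (1-m) * (3 - 2*τ) + K * τ * (3 - 2*(1-m)) := by
      rw [hG]; ring
    nlinarith [mul_nonneg (by linarith : (0:ℝ) ≤ 1-m) (by linarith : (0:ℝ) ≤ 3 - 2*τ),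
      mul_nonneg (mul_nonneg hK_pos.le hτ) (by linarith : (0:ℝ) ≤ 3 - 2*(1-m))]
  have hcert := cert_poly hm_pos.le hm1 hK_pos.le hKle2 hτ hτ1 hKd
  rw [← hG] at hcert
  -- assemble
  have hfirst : ρ ^ (a-1) * ((1+2*ρ*τ) - 1) * ((1+2*ρ*τ) + 1 - 2*ρ)
      = 4 * m * τ * (δ + (1-δ)*τ) := by
    rw [hrw, hδ]; field_simp; ring
  have hC : (2/(3^a-1))^2 = 4 / K^2 := by rw [hK, div_pow]; norm_num
  have hsq : ((1-m) + G*τ)^2 ≤ ((1+2*ρ*τ)^a - m)^2 := by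
    have h2 : 0 ≤ (1+2*ρ*τ)^a - m := le_trans hEGτ_nonneg hEGτ
    apply sq_le_sq'
    · linarith
    · exact hEGτ
  have hmain : 4 * m * τ * (δ + (1-δ)*τ) + (1-m)^2 ≤ (4/K^2) * ((1+2*ρ*τ)^a - m)^2 := by
    rw [div_mul_eq_mul_div, le_div_iff₀ (by positivity : (0:ℝ) < K^2)]
    calc (4 * m * τ * (δ + (1-δ)*τ) + (1-m)^2) * K^2
        = K^2*(1-m)^2 + 4*K^2*m*τ*(δ + (1-δ)*τ) := by ring
      _ ≤ 4*((1-m) + G*τ)^2 := hcert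
      _ ≤ 4*((1+2*ρ*τ)^a - m)^2 := by linarith [hsq]
  calc ρ ^ (a-1) * ((1+2*ρ*τ) - 1) * ((1+2*ρ*τ) + 1 - 2*ρ) + (1 - ρ^a)^2
      = 4 * m * τ * (δ + (1-δ)*τ) + (1-m)^2 := by rw [hfirst, hm]
    _ ≤ (4/K^2) * ((1+2*ρ*τ)^a - m)^2 := hmain
    _ = (2/(3^a-1))^2 * ((1+2*ρ*τ)^a - ρ^a)^2 := by rw [hC, hm]


noncomputable def fA (a b r : ℝ) : ℝ := if r ≤ 1 then r ^ a else r ^ b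
noncomputable def gA (a b r : ℝ) : ℝ := if r ≤ 1 then r else r ^ (b / a)

section pieces
variable {a b : ℝ}

lemma gA_pos {r : ℝ} (hr : 0 < r) : 0 < gA a b r := by
  unfold gA; split
  · exact hr
  · exact Real.rpow_pos_of_pos hr _

lemma fA_pos {r : ℝ} (hr : 0 < r) : 0 < fA a b r := by
  unfold fA; split <;> exact Real.rpow_pos_of_pos hr _

lemma fA_eq_gA (ha : 0 < a) {r : ℝ} (hr : 0 < r) : fA a b r = (gA a b r) ^ a := by
  unfold fA gA; split
  · rfl
  · rw [← Real.rpow_mul hr.le, div_mul_cancel₀ _ (ne_of_gt ha)]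

lemma gA_mono (ha : 0 < a) (ha1 : a ≤ 1) (hb : 1 ≤ b) {r s : ℝ} (hr : 0 < r)
    (hrs : r ≤ s) : gA a b r ≤ gA a b s := by
  have hba : (1:ℝ) ≤ b / a := (one_le_div ha).2 (le_trans ha1 hb)
  unfold gA
  split <;> split
  · exact hrs
  · rename_i h1 h2
    push_neg at h2
    calc r ≤ 1 := h1
      _ ≤ s ^ (b/a) := Real.one_le_rpow h2.le (by linarith)
  · rename_i h1 h2
    push_neg at h1
    linarith
  · rename_i h1 h2
    push_neg at h1
    exact Real.rpow_le_rpow (by linarith) hrs (by linarith)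

lemma gA_slope (ha : 0 < a) (ha1 : a ≤ 1) (hb : 1 ≤ b) {r s : ℝ} (hr : 0 < r)
    (hrs : r ≤ s) : gA a b r * s ≤ gA a b s * r := by
  have hba : (1:ℝ) ≤ b / a := (one_le_div ha).2 (le_trans ha1 hb)
  unfold gA
  split <;> split
  · linarith [mul_comm r s]
  · rename_i h1 h2
    push_neg at h2
    have hs : s = s ^ (1:ℝ) := (Real.rpow_one s).symm
    have h3 : s ≤ s ^ (b/a) := by
      nth_rewrite 1 [hs]
      exact Real.rpow_le_rpow_of_exponent_le h2.le hba
    nlinarith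
  · rename_i h1 h2
    push_neg at h1
    linarith
  · rename_i h1 h2
    push_neg at h1; push_neg at h2
    have h3 : r ^ (b/a - 1) ≤ s ^ (b/a - 1) :=
      Real.rpow_le_rpow (by linarith) hrs (by linarith)
    have e1 : r ^ (b/a) = r ^ (b/a - 1) * r := by
      rw [← Real.rpow_add_one (by linarith : r ≠ 0)]; ring_nf
    have e2 : s ^ (b/a) = s ^ (b/a - 1) * s := by
      rw [← Real.rpow_add_one (by linarith : s ≠ 0)]; ring_nf
    rw [e1, e2]
    have h4 := mul_le_mul_of_nonneg_right h3 (by positivity : (0:ℝ) ≤ r*s)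
    nlinarith [h4]

lemma fA_strictMono (ha : 0 < a) (ha1 : a ≤ 1) (hb : 1 ≤ b) {r s : ℝ} (hr : 0 < r)
    (hrs : r < s) : fA a b r < fA a b s := by
  unfold fA
  split <;> split
  · exact Real.rpow_lt_rpow hr.le hrs ha
  · rename_i h1 h2
    push_neg at h2
    calc r ^ a ≤ 1 := Real.rpow_le_one hr.le h1 ha.le
      _ < s ^ b := (Real.one_lt_rpow_iff_of_pos (by linarith)).2
          (Or.inl ⟨h2, by linarith⟩)
  · rename_i h1 h2
    push_neg at h1
    linarith
  · rename_i h1 h2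
    push_neg at h1
    exact Real.rpow_lt_rpow (by linarith) hrs (by linarith)

end pieces

/-- convexity chord-product lemma -/
lemma slope_sq {r s σ m n N : ℝ} (hr : 0 < r) (hrs : r ≤ s) (hsσ : s ≤ σ)
    (hm : 0 < m) (hmn : m ≤ n) (hnN : n ≤ N)
    (h1 : m * s ≤ n * r) (h2 : m * σ ≤ N * r) (h3 : n * σ ≤ N * s) :
    (n - m)^2 + (m*n/(r*s)) * ((σ-s)*(σ+s-2*r)) ≤ (N - m)^2 := by
  have hs : 0 < s := lt_of_lt_of_le hr hrs
  have f1 : n * (σ - s) / s ≤ N - n := by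
    rw [div_le_iff₀ hs]; nlinarith
  have f2 : m * (σ + s - 2*r) / r ≤ (N - m) + (n - m) := by
    rw [div_le_iff₀ hr]; nlinarith
  have g1 : 0 ≤ n * (σ - s) / s :=
    div_nonneg (mul_nonneg (by linarith) (by linarith)) hs.le
  have g2 : 0 ≤ m * (σ + s - 2*r) / r :=
    div_nonneg (mul_nonneg hm.le (by linarith)) hr.le
  have hp : (m * (σ + s - 2*r) / r) * (n * (σ - s) / s) ≤ ((N - m) + (n - m)) * (N - n) :=
    mul_le_mul f2 f1 g1 (by linarith)
  have he : (m * (σ + s - 2*r) / r) * (n * (σ - s) / s)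
      = (m*n/(r*s)) * ((σ-s)*(σ+s-2*r)) := by
    field_simp
  nlinarith [hp, he]


/-- unnormalized pure-power inequality -/
lemma pure_ineq {a m n σ : ℝ} (ha : 0 < a) (ha1 : a ≤ 1) (hm : 0 < m) (hmn : m ≤ n)
    (hnσ : n ≤ σ) (hσ : σ ≤ n + 2*m) :
    (n^a - m^a)^2 + (m*n)^(a-1) * ((σ-n)*(σ+n-2*m)) ≤ (2/(3^a-1))^2 * (σ^a - m^a)^2 := by
  have hn : 0 < n := lt_of_lt_of_le hm hmn
  have hσ0 : 0 < σ := lt_of_lt_of_le hn hnσ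
  set ρ := m / n with hρdef
  set τ := (σ - n) / (2*m) with hτdef
  have hρ : 0 < ρ := div_pos hm hn
  have hρ1 : ρ ≤ 1 := (div_le_one hn).2 hmn
  have hτ0 : 0 ≤ τ := div_nonneg (by linarith) (by linarith)
  have hτ1 : τ ≤ 1 := (div_le_one (by linarith)).2 (by linarith)
  have key := core_norm ha ha1 hρ hρ1 hτ0 hτ1
  have hp : 1 + 2*ρ*τ = σ / n := by
    rw [hρdef, hτdef]; field_simp; ring
  rw [hp] at key
  have hc : (0:ℝ) < (n^a)^2 := by positivity
  have key2 := mul_le_mul_of_nonneg_left key hc.le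
  -- rpow rewrites
  have hna : n^a = n^(a-1) * n := by
    rw [← Real.rpow_add_one (ne_of_gt hn)]; ring_nf
  have hma : m^a = m^(a-1) * m := by
    rw [← Real.rpow_add_one (ne_of_gt hm)]; ring_nf
  have hAn : (0:ℝ) < n^(a-1) := Real.rpow_pos_of_pos hn _
  have hAm : (0:ℝ) < m^(a-1) := Real.rpow_pos_of_pos hm _
  have hρa : ρ^a = m^a / n^a := by rw [hρdef, Real.div_rpow hm.le hn.le]
  have hρa1 : ρ^(a-1) = m^(a-1) / n^(a-1) := by rw [hρdef, Real.div_rpow hm.le hn.le]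
  have hσa : (σ/n)^a = σ^a / n^a := by rw [Real.div_rpow hσ0.le hn.le]
  have hmn_a : (m*n)^(a-1) = m^(a-1) * n^(a-1) := Real.mul_rpow hm.le hn.le
  have eqL : (n^a)^2 * (ρ ^ (a-1) * ((σ/n) - 1) * ((σ/n) + 1 - 2*ρ) + (1 - ρ^a)^2)
      = (m*n)^(a-1) * ((σ-n)*(σ+n-2*m)) + (n^a - m^a)^2 := by
    rw [hρa1, hρa, hρdef, hmn_a, hma, hna]
    field_simp
  have h31 : (1:ℝ) < 3 ^ a :=
    (Real.one_lt_rpow_iff_of_pos (by norm_num)).2 (Or.inl ⟨by norm_num, ha⟩)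
  have h31' : (3:ℝ)^a - 1 ≠ 0 := by linarith
  have eqR : (n^a)^2 * ((2/(3^a-1))^2 * ((σ/n)^a - ρ^a)^2)
      = (2/(3^a-1))^2 * (σ^a - m^a)^2 := by
    rw [hρa, hσa, div_sub_div_same, div_pow]
    have hne : (n^a)^2 ≠ 0 := by positivity
    field_simp
  rw [eqL, eqR] at key2
  linarith


-- master scalar inequality
set_option maxHeartbeats 1000000 in
lemma master {a b r s w : ℝ} (ha : 0 < a) (ha1 : a ≤ 1) (hb : 1 ≤ b) (hr : 0 < r)
    (hrs : r ≤ s) (hw : |w| ≤ r*s) :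
    (fA a b r)^2 + (fA a b s)^2 - 2*(fA a b r)*(fA a b s)*(w/(r*s))
      ≤ (2/(3^a-1))^2 * (fA a b (r + Real.sqrt (r^2+s^2-2*w)) - fA a b r)^2 := by
  have hs : 0 < s := lt_of_lt_of_le hr hrs
  obtain ⟨hw2, hw1⟩ := abs_le.1 hw
  set c := w / (r*s) with hcdef
  have hrs_pos : 0 < r * s := mul_pos hr hs
  have hc1 : c ≤ 1 := by rw [hcdef, div_le_one hrs_pos]; linarith
  have hc2 : -1 ≤ c := by rw [hcdef, le_div_iff₀ hrs_pos]; linarith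
  have hwc : w = c * (r*s) := by rw [hcdef]; field_simp
  clear_value c
  set t := Real.sqrt (r^2+s^2-2*w) with htdef
  have harg : 0 ≤ r^2+s^2-2*w := by nlinarith [sq_nonneg (r-s)]
  have ht0 : 0 ≤ t := Real.sqrt_nonneg _
  have ht2 : t^2 = r^2+s^2-2*w := Real.sq_sqrt harg
  clear_value t
  have htd : s - r ≤ t := by
    have h1 : (s-r)^2 ≤ t^2 := by nlinarith [ht2]
    have h2 := Real.sqrt_le_sqrt h1
    rw [Real.sqrt_sq (by linarith), Real.sqrt_sq ht0] at h2
    exact h2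
  set σ := r + t with hσdef
  have hσ_pos : 0 < σ := by rw [hσdef]; linarith
  have hsσ : s ≤ σ := by rw [hσdef]; linarith
  set m := gA a b r with hmdef
  set n := gA a b s with hndef
  set N := gA a b σ with hNdef
  have hm : 0 < m := gA_pos hr
  have hn : 0 < n := gA_pos hs
  have hmn : m ≤ n := gA_mono ha ha1 hb hr hrs
  have hnN : n ≤ N := gA_mono ha ha1 hb hs hsσ
  have h1 : m * s ≤ n * r := gA_slope ha ha1 hb hr hrs
  have h2 : m * σ ≤ N * r := gA_slope ha ha1 hb hr (by linarith)
  have h3 : n * σ ≤ N * s := gA_slope ha ha1 hb hs hsσ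
  have hfr : fA a b r = m ^ a := fA_eq_gA ha hr
  have hfs : fA a b s = n ^ a := fA_eq_gA ha hs
  have hfσ : fA a b σ = N ^ a := fA_eq_gA ha hσ_pos
  clear_value m n N
  have step1 := slope_sq hr hrs hsσ hm hmn hnN h1 h2 h3
  set T := Real.sqrt (m^2+n^2-2*m*n*c) with hTdef
  have hargT : 0 ≤ m^2+n^2-2*m*n*c := by
    nlinarith [sq_nonneg (m-n), mul_nonneg (mul_pos hm hn).le (by linarith : (0:ℝ) ≤ 1 - c)]
  have hT0 : 0 ≤ T := Real.sqrt_nonneg _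
  have hT2 : T^2 = m^2+n^2-2*m*n*c := Real.sq_sqrt hargT
  clear_value T
  have hTd : n - m ≤ T := by
    have hh : (n-m)^2 ≤ T^2 := by
      nlinarith [hT2, mul_nonneg (mul_pos hm hn).le (by linarith : (0:ℝ) ≤ 1 - c)]
    have h2' := Real.sqrt_le_sqrt hh
    rw [Real.sqrt_sq (by linarith), Real.sqrt_sq hT0] at h2'
    exact h2'
  have hTu : T ≤ n + m := by
    have hh : T^2 ≤ (n+m)^2 := by
      nlinarith [hT2, mul_nonneg (mul_pos hm hn).le (by linarith : (0:ℝ) ≤ 1 + c)]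
    have h2' := Real.sqrt_le_sqrt hh
    rw [Real.sqrt_sq hT0, Real.sqrt_sq (by linarith)] at h2'
    exact h2'
  have hTN : T ≤ N - m := by
    have hee : (σ-s)*(σ+s-2*r) = t^2 - (s-r)^2 := by rw [hσdef]; ring
    have het : t^2 - (s-r)^2 = 2*(r*s) - 2*w := by rw [ht2]; ring
    have hrel : (m*n/(r*s)) * ((σ-s)*(σ+s-2*r)) = T^2 - (n-m)^2 := by
      rw [hee, het, hT2, hwc]
      field_simp
      ring
    have hT2N : T^2 ≤ (N-m)^2 := by linarith [step1, hrel]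
    have h2' := Real.sqrt_le_sqrt hT2N
    rw [Real.sqrt_sq hT0, Real.sqrt_sq (by linarith)] at h2'
    exact h2'
  have pure := pure_ineq ha ha1 hm hmn (by linarith : n ≤ m + T) (by linarith : m + T ≤ n + 2*m)
  have hmn0 : m * n ≠ 0 := ne_of_gt (mul_pos hm hn)
  have hmna : (m*n)^a = (m*n)^(a-1) * (m*n) := by
    rw [← Real.rpow_add_one hmn0]; ring_nf
  have hmna2 : (m*n)^a = m^a * n^a := Real.mul_rpow hm.le hn.le
  have hchord : (fA a b r)^2 + (fA a b s)^2 - 2*(fA a b r)*(fA a b s)*c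
      = (n^a - m^a)^2 + (m*n)^(a-1) * (((m+T)-n)*((m+T)+n-2*m)) := by
    rw [hfr, hfs]
    have e1 : ((m+T)-n)*((m+T)+n-2*m) = T^2 - (n-m)^2 := by ring
    have e2 : T^2 - (n-m)^2 = 2*(m*n) - 2*(m*n)*c := by rw [hT2]; ring
    have e3 : (m*n)^(a-1) * (2*(m*n) - 2*(m*n)*c) = 2*(m^a*n^a) - 2*(m^a*n^a)*c := by
      have e4 : (m*n)^(a-1) * (2*(m*n) - 2*(m*n)*c)
          = 2*((m*n)^(a-1)*(m*n)) - 2*((m*n)^(a-1)*(m*n))*c := by ring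
      rw [e4, ← hmna, hmna2]
    rw [e1, e2, e3]
    ring
  have hmT0 : (0:ℝ) ≤ m + T := by linarith
  have hup : (m+T)^a ≤ N^a := Real.rpow_le_rpow hmT0 (by linarith) ha.le
  have hlo : m^a ≤ (m+T)^a := Real.rpow_le_rpow hm.le (by linarith) ha.le
  have hsq : ((m+T)^a - m^a)^2 ≤ (N^a - m^a)^2 :=
    pow_le_pow_left₀ (by linarith) (by linarith) 2
  have hCpos : (0:ℝ) ≤ (2/(3^a-1))^2 := sq_nonneg _
  calc (fA a b r)^2 + (fA a b s)^2 - 2*(fA a b r)*(fA a b s)*c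
      = (n^a - m^a)^2 + (m*n)^(a-1) * (((m+T)-n)*((m+T)+n-2*m)) := hchord
    _ ≤ (2/(3^a-1))^2 * ((m+T)^a - m^a)^2 := pure
    _ ≤ (2/(3^a-1))^2 * (N^a - m^a)^2 := mul_le_mul_of_nonneg_left hsq hCpos
    _ = (2/(3^a-1))^2 * (fA a b σ - fA a b r)^2 := by rw [hfσ, hfr]

lemma radialA_eq {n : ℕ} (a b : ℝ) (x : EuclideanSpace ℝ (Fin n)) (hx : x ≠ 0) :
    radialA n a b x = (fA a b ‖x‖ / ‖x‖) • x := by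
  have hx0 : 0 < ‖x‖ := norm_pos_iff.2 hx
  rw [radialA, fA]
  by_cases h : ‖x‖ ≤ 1
  · rw [if_pos h, if_pos h, Real.rpow_sub hx0, Real.rpow_one]
  · rw [if_neg h, if_neg h, Real.rpow_sub hx0, Real.rpow_one]

lemma fA_mono_le {a b : ℝ} (ha : 0 < a) (ha1 : a ≤ 1) (hb : 1 ≤ b) {r s : ℝ}
    (hr : 0 < r) (hrs : r ≤ s) : fA a b r ≤ fA a b s := by
  rcases eq_or_lt_of_le hrs with h | h
  · rw [h]
  · exact (fA_strictMono ha ha1 hb hr h).le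

/-- norm of the difference along a ray -/
lemma norm_ray_diff {n : ℕ} {a b : ℝ} (ha : 0 < a) (ha1 : a ≤ 1) (hb : 1 ≤ b)
    (x : EuclideanSpace ℝ (Fin n)) (hx : x ≠ 0) {t : ℝ} (ht : 0 ≤ t) :
    ‖radialA n a b x - radialA n a b (((‖x‖ + t) / ‖x‖) • x)‖
      = fA a b (‖x‖ + t) - fA a b ‖x‖ := by
  have hr : 0 < ‖x‖ := norm_pos_iff.2 hx
  have hco : (0:ℝ) < (‖x‖ + t) / ‖x‖ := div_pos (by linarith) hr
  have hz : ((‖x‖ + t) / ‖x‖) • x ≠ 0 := smul_ne_zero (ne_of_gt hco) hx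
  have hnz : ‖((‖x‖ + t) / ‖x‖) • x‖ = ‖x‖ + t := by
    rw [norm_smul, Real.norm_eq_abs, abs_of_pos hco, div_mul_cancel₀ _ (ne_of_gt hr)]
  rw [radialA_eq a b x hx, radialA_eq a b _ hz, hnz]
  rw [smul_smul]
  have e1 : fA a b (‖x‖ + t) / (‖x‖ + t) * ((‖x‖ + t) / ‖x‖) = fA a b (‖x‖ + t) / ‖x‖ := by
    field_simp
  rw [e1, ← sub_smul, norm_smul, Real.norm_eq_abs]
  have hmono : fA a b ‖x‖ ≤ fA a b (‖x‖ + t) := fA_mono_le ha ha1 hb hr (by linarith)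
  have e2 : |fA a b ‖x‖ / ‖x‖ - fA a b (‖x‖ + t) / ‖x‖|
      = (fA a b (‖x‖ + t) - fA a b ‖x‖) / ‖x‖ := by
    rw [div_sub_div_same, abs_div, abs_of_pos hr, abs_sub_comm,
      abs_of_nonneg (by linarith)]
  rw [e2]
  field_simp

lemma vector_main {n : ℕ} {a b : ℝ} (ha : 0 < a) (ha1 : a ≤ 1) (hb : 1 ≤ b)
    (x y : EuclideanSpace ℝ (Fin n)) (hx : x ≠ 0) (hy : y ≠ 0) (hrs : ‖x‖ ≤ ‖y‖) :
    ‖radialA n a b x - radialA n a b y‖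
      ≤ (2/(3^a-1)) * ‖radialA n a b x - radialA n a b (((‖x‖ + ‖x - y‖) / ‖x‖) • x)‖ := by
  have hr : 0 < ‖x‖ := norm_pos_iff.2 hx
  have hs : 0 < ‖y‖ := norm_pos_iff.2 hy
  have ht0 : (0:ℝ) ≤ ‖x - y‖ := norm_nonneg _
  have h31 : (1:ℝ) < 3 ^ a :=
    (Real.one_lt_rpow_iff_of_pos (by norm_num)).2 (Or.inl ⟨by norm_num, ha⟩)
  have hC : (0:ℝ) < 2/(3^a-1) := by
    apply div_pos (by norm_num); linarith
  have hD := norm_ray_diff ha ha1 hb x hx ht0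
  rw [hD]
  -- the chord squared identity
  have hw : |inner ℝ x y| ≤ ‖x‖ * ‖y‖ := abs_real_inner_le_norm x y
  have ht2 : ‖x - y‖^2 = ‖x‖^2 + ‖y‖^2 - 2 * (inner ℝ x y : ℝ) := by
    rw [@norm_sub_sq_real]; ring
  have hL2 : ‖radialA n a b x - radialA n a b y‖^2
      = (fA a b ‖x‖)^2 + (fA a b ‖y‖)^2
        - 2*(fA a b ‖x‖)*(fA a b ‖y‖)*((inner ℝ x y : ℝ)/(‖x‖*‖y‖)) := by
    rw [radialA_eq a b x hx, radialA_eq a b y hy, @norm_sub_sq_real]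
    rw [norm_smul, norm_smul, Real.norm_eq_abs, Real.norm_eq_abs,
      real_inner_smul_left, real_inner_smul_right]
    have hfr : 0 ≤ fA a b ‖x‖ := (fA_pos hr).le
    have hfs : 0 ≤ fA a b ‖y‖ := (fA_pos hs).le
    rw [abs_div, abs_of_nonneg hfr, abs_of_pos hr, abs_div, abs_of_nonneg hfs, abs_of_pos hs]
    field_simp
    ring
  have hmaster := master ha ha1 hb hr hrs hw
  have hsqrt : Real.sqrt (‖x‖^2 + ‖y‖^2 - 2*(inner ℝ x y : ℝ)) = ‖x - y‖ := by
    rw [show ‖x‖^2 + ‖y‖^2 - 2*(inner ℝ x y : ℝ) = ‖x - y‖^2 by rw [ht2],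
      Real.sqrt_sq ht0]
  rw [hsqrt] at hmaster
  rw [← hL2] at hmaster
  have hDpos : 0 ≤ fA a b (‖x‖ + ‖x - y‖) - fA a b ‖x‖ := by
    have := fA_mono_le ha ha1 hb hr (by linarith : ‖x‖ ≤ ‖x‖ + ‖x - y‖)
    linarith
  have hfin : ‖radialA n a b x - radialA n a b y‖^2
      ≤ ((2/(3^a-1)) * (fA a b (‖x‖ + ‖x - y‖) - fA a b ‖x‖))^2 := by
    calc ‖radialA n a b x - radialA n a b y‖^2
        ≤ (2/(3^a-1))^2 * (fA a b (‖x‖ + ‖x - y‖) - fA a b ‖x‖)^2 := hmaster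
      _ = ((2/(3^a-1)) * (fA a b (‖x‖ + ‖x - y‖) - fA a b ‖x‖))^2 := by ring
  have h2 := Real.sqrt_le_sqrt hfin
  rw [Real.sqrt_sq (norm_nonneg _), Real.sqrt_sq (by positivity)] at h2
  exact h2

lemma fA_one {a b : ℝ} : fA a b 1 = 1 := by
  rw [fA, if_pos le_rfl, Real.one_rpow]

lemma witness {n : ℕ} (hn : 2 ≤ n) {a b : ℝ} (ha : 0 < a) (ha1 : a ≤ 1) (hb : 1 ≤ b) :
    ∃ x y : EuclideanSpace ℝ (Fin n), x ≠ 0 ∧ y ≠ 0 ∧ ‖x‖ ≤ ‖y‖ ∧ x ≠ y ∧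
      2/(3^a-1) = ‖radialA n a b x - radialA n a b y‖ /
        ‖radialA n a b x - radialA n a b (((‖x‖ + ‖x - y‖) / ‖x‖) • x)‖ := by
  have h31 : (1:ℝ) < 3 ^ a :=
    (Real.one_lt_rpow_iff_of_pos (by norm_num)).2 (Or.inl ⟨by norm_num, ha⟩)
  set e : EuclideanSpace ℝ (Fin n) := EuclideanSpace.single (⟨0, by omega⟩ : Fin n) (1:ℝ)
    with hedef
  have he : ‖e‖ = 1 := by rw [hedef, EuclideanSpace.norm_single]; norm_num
  have he0 : e ≠ 0 := by
    intro h; rw [h] at he; simp at he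
  set x : EuclideanSpace ℝ (Fin n) := (3:ℝ)⁻¹ • e with hxdef
  have hx0 : x ≠ 0 := smul_ne_zero (by norm_num) he0
  have hxn : ‖x‖ = 3⁻¹ := by
    rw [hxdef, norm_smul, he, Real.norm_eq_abs]; norm_num
  refine ⟨x, -x, hx0, neg_ne_zero.2 hx0, by rw [norm_neg], ?_, ?_⟩
  · intro h
    apply hx0
    have h2 : x + x = 0 := by nth_rewrite 1 [h]; simp
    have := smul_eq_zero.1 (by rw [two_smul]; exact h2 : (2:ℝ) • x = 0)
    rcases this with h3 | h3
    · norm_num at h3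
    · exact h3
  · have hxy : x - -x = (2:ℝ) • x := by rw [two_smul]; abel
    have hxyn : ‖x - -x‖ = 2/3 := by
      rw [hxy, norm_smul, hxn, Real.norm_eq_abs]; norm_num
    have hrpos : (0:ℝ) < ‖x‖ := by rw [hxn]; norm_num
    have hf3 : fA a b 3⁻¹ = ((3:ℝ)^a)⁻¹ := by
      rw [fA, if_pos (by norm_num : (3:ℝ)⁻¹ ≤ 1), Real.inv_rpow (by norm_num : (0:ℝ) ≤ 3)]
    -- denominator
    have hD := norm_ray_diff ha ha1 hb x hx0 (t := ‖x - -x‖) (norm_nonneg _)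
    have hD2 : ‖radialA n a b x - radialA n a b (((‖x‖ + ‖x - -x‖) / ‖x‖) • x)‖
        = 1 - ((3:ℝ)^a)⁻¹ := by
      rw [hD, hxn, hxyn, show (3:ℝ)⁻¹ + 2/3 = 1 by norm_num, fA_one, hf3]
    -- numerator
    have hAy : radialA n a b (-x) = - radialA n a b x := by
      rw [radialA_eq a b (-x) (neg_ne_zero.2 hx0), radialA_eq a b x hx0, norm_neg,
        smul_neg]
    have hfpos : 0 < fA a b ‖x‖ := fA_pos hrpos
    have hN : ‖radialA n a b x - radialA n a b (-x)‖ = 2 * fA a b ‖x‖ := by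
      rw [hAy, sub_neg_eq_add, radialA_eq a b x hx0, ← two_smul ℝ, smul_smul, norm_smul,
        Real.norm_eq_abs, abs_of_pos (by positivity : 0 < 2 * (fA a b ‖x‖ / ‖x‖))]
      field_simp
    rw [hxn, hf3] at hN
    rw [hN, hD2]
    have hne1 : (3:ℝ)^a - 1 ≠ 0 := by linarith
    have hne2 : (3:ℝ)^a ≠ 0 := by positivity
    have hne3 : 1 - ((3:ℝ)^a)⁻¹ ≠ 0 := by
      have h4 : ((3:ℝ)^a)⁻¹ < 1 := by
        rw [inv_lt_one_iff₀]; right; exact h31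
      linarith
    field_simp

theorem stmt_16 (n : ℕ) (hn : 2 ≤ n) (a b : ℝ) (ha : 0 < a) (ha1 : a ≤ 1) (hb : 1 ≤ b) :
    (∀ x y : EuclideanSpace ℝ (Fin n), x ≠ 0 → y ≠ 0 → ‖x‖ ≤ ‖y‖ → x ≠ y →
      ‖radialA n a b x - radialA n a b y‖ ≤
        (2 / (3 ^ a - 1)) *
          ‖radialA n a b x - radialA n a b (((‖x‖ + ‖x - y‖) / ‖x‖) • x)‖) ∧
    IsLUB {q : ℝ | ∃ x y : EuclideanSpace ℝ (Fin n), x ≠ 0 ∧ y ≠ 0 ∧ ‖x‖ ≤ ‖y‖ ∧ x ≠ y ∧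
        q = ‖radialA n a b x - radialA n a b y‖ /
          ‖radialA n a b x - radialA n a b (((‖x‖ + ‖x - y‖) / ‖x‖) • x)‖}
      (2 / (3 ^ a - 1)) := by
  constructor
  · intro x y hx hy hrs _hne
    exact vector_main ha ha1 hb x y hx hy hrs
  · apply IsGreatest.isLUB
    constructor
    · obtain ⟨x, y, hx, hy, hrs, hxy, heq⟩ := witness hn ha ha1 hb
      exact ⟨x, y, hx, hy, hrs, hxy, heq⟩
    · rintro q ⟨x, y, hx, hy, hrs, hxy, rfl⟩
      have hr : 0 < ‖x‖ := norm_pos_iff.2 hx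
      have ht : 0 < ‖x - y‖ := by rw [norm_pos_iff]; exact sub_ne_zero.2 hxy
      have hD := norm_ray_diff ha ha1 hb x hx (t := ‖x - y‖) (norm_nonneg _)
      have hDpos : 0 < ‖radialA n a b x - radialA n a b (((‖x‖ + ‖x - y‖)/‖x‖) • x)‖ := by
        rw [hD]
        have := fA_strictMono ha ha1 hb hr (by linarith : ‖x‖ < ‖x‖ + ‖x - y‖)
        linarith
      rw [div_le_iff₀ hDpos]
      exact vector_main ha ha1 hb x y hx hy hrs
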